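/- det M₀ = (−1)^n · (n + 3). (In the paper's notation, det M₀ = (−1)^{t₀−1}(t₀ + 2), which via the formula tb(K₀) = −2 + det M₀ / det M yields the Thurston–Bennequin invariant tb(K₀) = t₀.) -/

import Mathlib

open Matrix

/-- The linking matrix `M` from Section 6 of the paper: an `n x n` matrix over `Q`
(indices `0, ..., n-1` here correspond to the paper's `1, ..., n`) with diagonal entries `-2`
except the last one which is `-1`, entries `-1` on the super- and sub-diagonal,
extra entries `-1` at positions `(1,3)` and `(3,1)` (paper indexing), and zeros elsewhere. -/
def linkM (n : ℕ) : Matrix (Fin n) (Fin n) ℚ :=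
  Matrix.of fun i j =>
    if i = j then (if (i : ℕ) = n - 1 then -1 else -2)
    else if (i : ℕ) + 1 = (j : ℕ) ∨ (j : ℕ) + 1 = (i : ℕ) then -1
    else if ((i : ℕ) = 0 ∧ (j : ℕ) = 2) ∨ ((i : ℕ) = 2 ∧ (j : ℕ) = 0) then -1
    else 0

/-- The extended linking matrix: an `(n+1) x (n+1)` matrix (indices `0, 1, ..., n` as in the
paper), whose `(0,0)` entry is `0`, whose first row and first column (off the corner) are a
given vector `c`, and whose remaining `n x n` block is the linking matrix `linkM n`. -/
def extM (n : ℕ) (c : Fin n → ℚ) : Matrix (Fin (n + 1)) (Fin (n + 1)) ℚ :=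
  Matrix.of (Fin.cases (Fin.cases (0 : ℚ) c)
    (fun i => Fin.cases (c i) (fun j => linkM n i j)))

/-- The vector of linking numbers of `K₀` with the surgery curves: `bₙ₋₁ = -1`, `bₙ = -2`
(paper indexing), all other entries `0`. -/
def vecB (n : ℕ) : Fin n → ℚ := fun i =>
  if (i : ℕ) = n - 2 then -1 else if (i : ℕ) = n - 1 then -2 else 0


def aa (n j : ℕ) : ℚ :=
  if j = 0 then 1 else if j = n then 2 else if j = 1 then (-1)^n else (-1)^(n+j)

def matE (n : ℕ) : Matrix (Fin (n+1)) (Fin (n+1)) ℚ :=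
  Matrix.of fun i j =>
    if (i:ℕ) = 0 then aa n j
    else if (i:ℕ) = (j:ℕ) then 1
    else if ((j:ℕ) = (i:ℕ)+1 ∧ 3 ≤ (i:ℕ)) ∨ ((j:ℕ) = 3 ∧ (i:ℕ) ≤ 2) then 1
    else 0

def matT (n : ℕ) : Matrix (Fin (n+1)) (Fin (n+1)) ℚ :=
  Matrix.of fun i j =>
    if (j:ℕ) = 0 then (if (i:ℕ) = 0 then (n:ℚ)+3 else -aa n i)
    else if (i:ℕ) = (j:ℕ) then -1
    else if ((j:ℕ)+1 = (i:ℕ) ∧ 3 ≤ (i:ℕ)) ∨ ((i:ℕ) = 3 ∧ (j:ℕ) = 1) then -1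
    else 0

lemma sum_two {N : ℕ} (u v : Fin N) (f : Fin N → ℚ) (cu cv : ℚ)
    (h : ∀ k, f k = (if k = u then cu else 0) + (if k = v then cv else 0)) :
    ∑ k, f k = cu + cv := by
  simp [h, Finset.sum_add_distrib]

lemma sum_one {N : ℕ} (u : Fin N) (f : Fin N → ℚ) (cu : ℚ)
    (h : ∀ k, f k = if k = u then cu else 0) :
    ∑ k, f k = cu := by
  simp [h]

lemma aa_sq (n k : ℕ) (h0 : k ≠ 0) (hn : k ≠ n) : aa n k * aa n k = 1 := by
  unfold aa
  rw [if_neg h0, if_neg hn]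
  split_ifs <;> rw [← pow_add, ← two_mul, pow_mul] <;> norm_num

lemma aa_last (n : ℕ) (h : n ≠ 0) : aa n n = 2 := by
  unfold aa; rw [if_neg h, if_pos rfl]

lemma aa_one (n : ℕ) (h : n ≠ 1) : aa n 1 = (-1)^n := by
  unfold aa
  rw [if_neg one_ne_zero, if_neg (fun hh => h hh.symm), if_pos rfl]

lemma aa_mid (n k : ℕ) (h2 : 2 ≤ k) (hk : k ≤ n - 1) (hn : 4 ≤ n) :
    aa n k = (-1)^(n+k) := by
  unfold aa
  rw [if_neg (by omega), if_neg (by omega), if_neg (by omega)]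

lemma aa_pred (n : ℕ) (hn : 4 ≤ n) : aa n (n-1) = -1 := by
  rw [aa_mid n (n-1) (by omega) (by omega) hn]
  have : n + (n-1) = 2*(n-1)+1 := by omega
  rw [this, pow_succ, pow_mul]
  norm_num

lemma aa_succ (n k : ℕ) (h1 : 2 ≤ k) (h2 : k + 1 ≤ n - 1) (hn : 4 ≤ n) :
    aa n k + aa n (k+1) = 0 := by
  rw [aa_mid n k h1 (by omega) hn, aa_mid n (k+1) (by omega) h2 hn,
    show n + (k+1) = (n+k)+1 from rfl, pow_succ]
  ring

-- evaluation lemmas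
lemma extM_00 (n : ℕ) (c : Fin n → ℚ) : extM n c 0 0 = 0 := by simp [extM]
lemma extM_0s (n : ℕ) (c : Fin n → ℚ) (j : Fin n) : extM n c 0 j.succ = c j := by
  simp [extM]
lemma extM_s0 (n : ℕ) (c : Fin n → ℚ) (i : Fin n) : extM n c i.succ 0 = c i := by
  simp [extM]
lemma extM_ss (n : ℕ) (c : Fin n → ℚ) (i j : Fin n) :
    extM n c i.succ j.succ = linkM n i j := by simp [extM]

lemma matT_col0 (n : ℕ) (i : Fin (n+1)) :
    matT n i 0 = if (i:ℕ) = 0 then (n:ℚ)+3 else -aa n i := by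
  simp [matT]

lemma matT_apply (n : ℕ) (i j : Fin (n+1)) (hj : (j:ℕ) ≠ 0) :
    matT n i j = if (i:ℕ) = (j:ℕ) then -1
      else if ((j:ℕ)+1 = (i:ℕ) ∧ 3 ≤ (i:ℕ)) ∨ ((i:ℕ) = 3 ∧ (j:ℕ) = 1) then -1
      else 0 := by
  simp only [matT, of_apply]; rw [if_neg hj]

lemma matE_row0 (n : ℕ) (k : Fin (n+1)) : matE n 0 k = aa n k := by simp [matE]

lemma matE_apply (n : ℕ) (i k : Fin (n+1)) (hi : (i:ℕ) ≠ 0) :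
    matE n i k = if (i:ℕ) = (k:ℕ) then 1
      else if ((k:ℕ) = (i:ℕ)+1 ∧ 3 ≤ (i:ℕ)) ∨ ((k:ℕ) = 3 ∧ (i:ℕ) ≤ 2) then 1
      else 0 := by
  simp only [matE, of_apply]; rw [if_neg hi]


lemma linkM_apply (n : ℕ) (i j : Fin n) : linkM n i j =
    if (i:ℕ) = (j:ℕ) then (if (i : ℕ) = n - 1 then -1 else -2)
    else if (i : ℕ) + 1 = (j : ℕ) ∨ (j : ℕ) + 1 = (i : ℕ) then -1
    else if ((i : ℕ) = 0 ∧ (j : ℕ) = 2) ∨ ((i : ℕ) = 2 ∧ (j : ℕ) = 0) then -1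
    else 0 := by
  simp only [linkM, of_apply, Fin.ext_iff]

set_option maxHeartbeats 1000000 in
lemma factor (n : ℕ) (hn : 4 ≤ n) : extM n (vecB n) = matE n * matT n := by
  funext i j
  rw [Matrix.mul_apply]
  induction i using Fin.cases with
  | zero =>
    induction j using Fin.cases with
    | zero =>
      have h : ∀ k : Fin (n+1), matE n 0 k * matT n k 0 =
          -1 + ((if k = 0 then (n:ℚ)+4 else 0) + (if k = Fin.last n then -3 else 0)) := by
        intro k
        rw [matE_row0, matT_col0]
        by_cases hk0 : (k:ℕ) = 0
        · have : k = 0 := by rw [Fin.ext_iff]; exact hk0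
          subst this
          have h1 : (0 : Fin (n+1)) ≠ Fin.last n := by
            intro h
            have := congrArg Fin.val h
            simp only [Fin.val_last, Fin.val_zero] at this
            omega
          norm_num [aa, h1]
          ring
        · rw [if_neg hk0, if_neg (by rw [Fin.ext_iff]; exact hk0)]
          by_cases hkn : (k:ℕ) = n
          · rw [if_pos (by rw [Fin.ext_iff, Fin.val_last]; exact hkn), hkn,
              aa_last n (by omega)]
            ring
          · rw [if_neg (by rw [Fin.ext_iff, Fin.val_last]; exact hkn)]
            have := aa_sq n k hk0 hkn
            nlinarith [this]
      rw [Finset.sum_congr rfl (fun k _ => h k), Finset.sum_add_distrib,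
        Finset.sum_add_distrib, Finset.sum_const, Finset.card_univ]
      simp only [Finset.sum_ite_eq', Finset.mem_univ, if_pos, Fintype.card_fin]
      rw [extM_00]
      push_cast
      ring
    | succ j' =>
      have hj' := j'.isLt
      rw [extM_0s]
      have hjs : ((j'.succ : Fin (n+1)) : ℕ) = (j':ℕ)+1 := rfl
      by_cases hc1 : (j':ℕ) = n - 1
      · -- j = n : single entry at k = last
        rw [sum_one (Fin.last n) _ (-2) ?_]
        · unfold vecB; rw [if_neg (by omega), if_pos hc1]
        · intro k
          rw [matE_row0, matT_apply n k j'.succ (by rw [hjs]; omega)]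
          by_cases hk : k = Fin.last n
          · subst hk
            rw [if_pos rfl, if_pos (by rw [Fin.val_last, hjs]; omega),
              Fin.val_last, aa_last n (by omega)]
            ring
          · have hk' : (k:ℕ) ≠ n := by rw [Fin.ext_iff, Fin.val_last] at hk; exact hk
            rw [if_neg hk, if_neg (by rw [hjs]; omega), if_neg (by rw [hjs]; omega),
              mul_zero]
      · by_cases hc0 : (j':ℕ) = 0
        · -- j = 1 : entries at k = 1 and k = 3
          set v : Fin (n+1) := ⟨3, by omega⟩ with hv
          have hvv : (v:ℕ) = 3 := rfl
          rw [sum_two j'.succ v _ (-(-1)^n) (-(-1)^(n+3)) ?_]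
          · unfold vecB
            rw [if_neg (by omega), if_neg (by omega), pow_add]
            ring
          · intro k
            rw [matE_row0, matT_apply n k j'.succ (by rw [hjs]; omega)]
            by_cases hk1 : k = j'.succ
            · subst hk1
              rw [if_pos rfl, if_pos rfl, if_neg (by rw [Fin.ext_iff, hjs, hvv]; omega),
                hjs, hc0, aa_one n (by omega)]
              ring
            · have hk1' : (k:ℕ) ≠ (j':ℕ)+1 := by
                rw [Fin.ext_iff, hjs] at hk1; exact hk1
              rw [if_neg hk1, if_neg (by omega)]
              by_cases hk2 : k = v
              · subst hk2
                rw [if_pos (by rw [hvv, hjs]; omega), if_pos rfl, hvv,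
                  aa_mid n 3 (by omega) (by omega) hn]
                ring
              · have hk2' : (k:ℕ) ≠ 3 := by rw [Fin.ext_iff, hvv] at hk2; exact hk2
                rw [if_neg hk2, if_neg (by rw [hjs]; omega), mul_zero]
                ring
        · -- 2 ≤ j ≤ n-1 : entries at k = j and k = j+1
          set v : Fin (n+1) := ⟨(j':ℕ)+2, by omega⟩ with hv
          have hvv : (v:ℕ) = (j':ℕ)+2 := rfl
          rw [sum_two j'.succ v _ (-aa n ((j':ℕ)+1)) (-aa n ((j':ℕ)+2)) ?_]
          · by_cases hc2 : (j':ℕ) = n - 2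
            · unfold vecB
              rw [if_pos hc2, show (j':ℕ)+1 = n-1 by omega, show (j':ℕ)+2 = n by omega,
                aa_pred n hn, aa_last n (by omega)]
              ring
            · unfold vecB
              rw [if_neg hc2, if_neg hc1]
              have := aa_succ n ((j':ℕ)+1) (by omega) (by omega) hn
              linarith [this]
          · intro k
            rw [matE_row0, matT_apply n k j'.succ (by rw [hjs]; omega)]
            by_cases hk1 : k = j'.succ
            · subst hk1
              rw [if_pos rfl, if_pos rfl, if_neg (by rw [Fin.ext_iff, hjs, hvv]; omega), hjs]
              ring
            · have hk1' : (k:ℕ) ≠ (j':ℕ)+1 := by rw [Fin.ext_iff, hjs] at hk1; exact hk1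
              rw [if_neg hk1, if_neg (by omega)]
              by_cases hk2 : k = v
              · subst hk2
                rw [if_pos (by rw [hvv, hjs]; omega), if_pos rfl, hvv]
                ring
              · have hk2' : (k:ℕ) ≠ (j':ℕ)+2 := by rw [Fin.ext_iff, hvv] at hk2; exact hk2
                rw [if_neg hk2, if_neg (by rw [hjs]; omega), mul_zero]
                ring
  | succ i' =>
    have hi' := i'.isLt
    have his : ((i'.succ : Fin (n+1)) : ℕ) = (i':ℕ)+1 := rfl
    by_cases hA : (i':ℕ) = n - 1
    · -- i = n : identity row of E
      rw [sum_one i'.succ _ (matT n i'.succ j) ?_]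
      · induction j using Fin.cases with
        | zero =>
          rw [extM_s0, matT_col0, if_neg (by rw [his]; omega), his,
            show (i':ℕ)+1 = n by omega, aa_last n (by omega)]
          unfold vecB
          rw [if_neg (by omega), if_pos hA]
        | succ j' =>
          have hj' := j'.isLt
          have hjs : ((j'.succ : Fin (n+1)) : ℕ) = (j':ℕ)+1 := rfl
          rw [extM_ss, linkM_apply, matT_apply n _ _ (by rw [hjs]; omega), his, hjs]
          split_ifs <;> first | omega | norm_num
      · intro k
        by_cases hk : k = i'.succ
        · subst hk; rw [matE_apply n _ _ (by rw [his]; omega), if_pos rfl, if_pos rfl, one_mul]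
        · have hk' : (k:ℕ) ≠ (i':ℕ)+1 := by rw [Fin.ext_iff, his] at hk; exact hk
          have hkn := k.isLt
          rw [matE_apply n _ _ (by rw [his]; omega), his,
            if_neg (by omega), if_neg (by omega), zero_mul, if_neg hk]
    · by_cases hB : (i':ℕ) ≤ 1
      · -- i ∈ {1,2} : partner column 3
        set v : Fin (n+1) := ⟨3, by omega⟩ with hv
        have hvv : (v:ℕ) = 3 := rfl
        have hne : i'.succ ≠ v := by simp only [ne_eq, Fin.ext_iff, his, hvv]; omega
        rw [sum_two i'.succ v _ (matT n i'.succ j) (matT n v j) ?_]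
        · induction j using Fin.cases with
          | zero =>
            rw [extM_s0, matT_col0, matT_col0, if_neg (by rw [his]; omega),
              if_neg (by rw [hvv]; omega), his, hvv,
              aa_mid n 3 (by omega) (by omega) hn]
            unfold vecB
            rw [if_neg (by omega), if_neg (by omega)]
            interval_cases h : (i':ℕ)
            · rw [aa_one n (by omega), pow_add]; ring
            · rw [aa_mid n 2 (by omega) (by omega) hn, pow_add, pow_add]; ring
          | succ j' =>
            have hj' := j'.isLt
            have hjs : ((j'.succ : Fin (n+1)) : ℕ) = (j':ℕ)+1 := rfl
            rw [extM_ss, linkM_apply, matT_apply n _ _ (by rw [hjs]; omega),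
              matT_apply n _ _ (by rw [hjs]; omega), his, hjs, hvv]
            split_ifs <;> first | omega | norm_num
        · intro k
          rw [matE_apply n _ _ (by rw [his]; omega), his]
          by_cases hk : k = i'.succ
          · subst hk
            rw [if_pos (show (i':ℕ)+1 = ((i'.succ : Fin (n+1)):ℕ) by rw [his]),
              one_mul, if_pos rfl, if_neg hne, add_zero]
          · have hk' : (k:ℕ) ≠ (i':ℕ)+1 := by rw [Fin.ext_iff, his] at hk; exact hk
            rw [if_neg hk, if_neg (by rw [Fin.ext_iff, his] at hk; omega)]
            by_cases hk2 : k = v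
            · subst hk2
              rw [if_pos (by rw [hvv]; omega), one_mul, if_pos rfl]
              ring
            · have hk2' : (k:ℕ) ≠ 3 := by rw [Fin.ext_iff, hvv] at hk2; exact hk2
              rw [if_neg (by omega), zero_mul, if_neg hk2]
              ring
      · -- 3 ≤ i ≤ n-1 : partner column i+1
        set v : Fin (n+1) := ⟨(i':ℕ)+2, by omega⟩ with hv
        have hvv : (v:ℕ) = (i':ℕ)+2 := rfl
        have hne : i'.succ ≠ v := by simp only [ne_eq, Fin.ext_iff, his, hvv]; omega
        rw [sum_two i'.succ v _ (matT n i'.succ j) (matT n v j) ?_]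
        · induction j using Fin.cases with
          | zero =>
            rw [extM_s0, matT_col0, matT_col0, if_neg (by rw [his]; omega),
              if_neg (by rw [hvv]; omega), his, hvv]
            unfold vecB
            by_cases hc2 : (i':ℕ) = n - 2
            · rw [if_pos hc2, show (i':ℕ)+1 = n-1 by omega, show (i':ℕ)+2 = n by omega,
                aa_pred n hn, aa_last n (by omega)]
              norm_num
            · rw [if_neg hc2, if_neg hA]
              have := aa_succ n ((i':ℕ)+1) (by omega) (by omega) hn
              linarith [this]
          | succ j' =>
            have hj' := j'.isLt
            have hjs : ((j'.succ : Fin (n+1)) : ℕ) = (j':ℕ)+1 := rfl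
            rw [extM_ss, linkM_apply, matT_apply n _ _ (by rw [hjs]; omega),
              matT_apply n _ _ (by rw [hjs]; omega), his, hjs, hvv]
            split_ifs <;> first | omega | norm_num
        · intro k
          rw [matE_apply n _ _ (by rw [his]; omega), his]
          by_cases hk : k = i'.succ
          · subst hk
            rw [if_pos (show (i':ℕ)+1 = ((i'.succ : Fin (n+1)):ℕ) by rw [his]),
              one_mul, if_pos rfl, if_neg hne, add_zero]
          · have hk' : (k:ℕ) ≠ (i':ℕ)+1 := by rw [Fin.ext_iff, his] at hk; exact hk
            rw [if_neg (by omega)]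
            by_cases hk2 : k = v
            · subst hk2
              rw [if_pos (by rw [hvv]; omega), one_mul, if_pos rfl, if_neg (by
                rw [Fin.ext_iff, his, hvv]; omega)]
              ring
            · have hk2' : (k:ℕ) ≠ (i':ℕ)+2 := by rw [Fin.ext_iff, hvv] at hk2; exact hk2
              rw [if_neg (by omega), zero_mul, if_neg hk, if_neg hk2]
              ring

lemma matE_diag (n : ℕ) (i : Fin (n+1)) : matE n i i = 1 := by
  by_cases h : (i:ℕ) = 0
  · simp only [matE, of_apply]; rw [if_pos h, h]; simp [aa]
  · simp only [matE, of_apply]; rw [if_neg h, if_pos trivial]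

lemma det_matE (n : ℕ) : (matE n).det = 1 := by
  rw [Matrix.det_of_upperTriangular]
  · simp [matE_diag]
  · intro i j hij
    have h1 : (j:ℕ) < (i:ℕ) := hij
    simp only [matE, of_apply]
    rw [if_neg (by omega), if_neg (by omega), if_neg (by omega)]

lemma det_matT (n : ℕ) : (matT n).det = ((n:ℚ)+3) * (-1)^n := by
  rw [Matrix.det_of_lowerTriangular]
  · rw [Fin.prod_univ_succ]
    have h0 : matT n 0 0 = (n:ℚ)+3 := by simp [matT]
    have hs : ∀ i : Fin n, matT n i.succ i.succ = -1 := by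
      intro i; rw [matT_apply n _ _ (by rw [Fin.val_succ]; omega), if_pos rfl]
    rw [h0, Finset.prod_congr rfl (fun i _ => hs i)]
    simp [mul_comm]
  · intro i j hij
    have h1 : (i:ℕ) < (j:ℕ) := hij
    simp only [matT, of_apply]
    rw [if_neg (by omega), if_neg (by omega), if_neg (by omega)]


/-- `det M₀ = (-1)^n * (n + 3)`. -/
theorem stmt_2 (n : ℕ) (hn : 4 ≤ n) :
    (extM n (vecB n)).det = (-1 : ℚ) ^ n * (n + 3) := by
  rw [factor n hn, Matrix.det_mul, det_matE, det_matT]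
  ring
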